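/- Let F be a field, let V be a finite-dimensional F-vector space, and let x ⊆ y ⊆ V be subspaces with dim x = k and dim y = k+s+1 (so ℙ(x) has projective dimension k−1 and ℙ(y) has projective dimension k+s). Fix a basis x_0,…,x_{k−1} of x, let ω = x_0 ∧ ⋯ ∧ x_{k−1}, and let W = {ω ∧ v : v ∈ y} ⊆ ⋀^{k+1} V. Then: (i) W has dimension s+1; (ii) every element of W is totally decomposable; (iii) for linearly independent v_0,…,v_k ∈ V, the vector v_0 ∧ ⋯ ∧ v_k lies in W if and only if x ⊆ span{v_0,…,v_k} ⊆ y. In other words, the set of k-dimensional projective subspaces of ℙ(V) containing ℙ(x) and contained in ℙ(y) corresponds to the points of an s-dimensional projective subspace contained in the Plücker embedding of the Grassmannian. -/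

import Mathlib

section Aux

open ExteriorAlgebra

variable {F : Type*} [Field F] {V : Type*} [AddCommGroup V] [Module F V]

private lemma range_snoc' {n : ℕ} (v : Fin n → V) (u : V) :
    Set.range (Fin.snoc v u : Fin (n + 1) → V) = insert u (Set.range v) := by
  ext w
  constructor
  · rintro ⟨i, rfl⟩
    induction i using Fin.lastCases with
    | last => simp
    | cast j => simp [Fin.snoc_castSucc]
  · rintro (rfl | ⟨j, rfl⟩)
    · exact ⟨Fin.last n, by simp⟩
    · exact ⟨j.castSucc, by simp⟩

/-- module-valued version of `AlternatingMap.eq_smul_basis_det` -/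
private lemma alt_apply_eq_det_smul {n : ℕ} {M N : Type*} [AddCommGroup M] [Module F M]
    [AddCommGroup N] [Module F N] (e : Module.Basis (Fin n) F M) (f : M [⋀^Fin n]→ₗ[F] N)
    (m : Fin n → M) : f m = e.det m • f e := by
  classical
  have : f = (LinearMap.smulRight (LinearMap.id : F →ₗ[F] F) (f e)).compAlternatingMap e.det := by
    refine Module.Basis.ext_alternating e fun i h => ?_
    let σ : Equiv.Perm (Fin n) := Equiv.ofBijective i (Finite.injective_iff_bijective.1 h)
    show f (e ∘ σ) = _
    simp only [LinearMap.compAlternatingMap_apply, LinearMap.smulRight_apply,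
      LinearMap.id_apply]
    rw [show (fun j => e (i j)) = (⇑e ∘ ⇑σ) from rfl, AlternatingMap.map_perm,
      AlternatingMap.map_perm, Module.Basis.det_self]
    simp [Units.smul_def, Int.cast_smul_eq_zsmul]
  rw [this]
  simp [Module.Basis.det_self]

private lemma iotaMulti_ne_zero {n : ℕ} {v : Fin n → V} (hv : LinearIndependent F v) :
    ιMulti F n v ≠ 0 := by
  classical
  set U := Submodule.span F (Set.range v) with hU
  obtain ⟨q, hq⟩ := Submodule.exists_isCompl U
  let π : V →ₗ[F] U := Submodule.projectionOnto U q hq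
  let b : Module.Basis (Fin n) F U := Module.Basis.span hv
  let f : V [⋀^Fin n]→ₗ[F] F := b.det.compLinearMap π
  have hfv : f v = 1 := by
    have : (fun i => π (v i)) = ⇑b := by
      funext i
      have hmem : v i ∈ U := Submodule.subset_span (Set.mem_range_self i)
      have : π (v i) = ⟨v i, hmem⟩ := Submodule.projectionOnto_apply_left hq ⟨v i, hmem⟩
      rw [this]
      exact Subtype.ext (congrArg Subtype.val (Module.Basis.span_apply hv i).symm)
    show b.det (fun i => π (v i)) = 1
    rw [this, Module.Basis.det_self]
  intro h0
  have := congrArg (liftAlternating (R := F) (Pi.single n f)) h0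
  rw [liftAlternating_apply_ιMulti, map_zero, Pi.single_eq_same, hfv] at this
  exact one_ne_zero this

private lemma iotaMulti_eq_zero_iff {n : ℕ} (v : Fin n → V) :
    ιMulti F n v = 0 ↔ ¬ LinearIndependent F v := by
  constructor
  · intro h hv; exact iotaMulti_ne_zero hv h
  · intro h; exact AlternatingMap.map_linearDependent _ v h

private lemma iota_mul_iotaMulti {n : ℕ} (w : V) (v : Fin n → V) :
    ι F w * ιMulti F n v = ιMulti F (n + 1) (Fin.cons w v) := by
  rw [ιMulti_succ_apply]
  congr 1

private lemma iota_mul_eq_zero_iff {n : ℕ} {v : Fin n → V} (hv : LinearIndependent F v)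
    (w : V) : ι F w * ιMulti F n v = 0 ↔ w ∈ Submodule.span F (Set.range v) := by
  rw [iota_mul_iotaMulti, iotaMulti_eq_zero_iff, linearIndependent_fin_cons]
  tauto

private lemma span_eq_of_iotaMulti_eq {n : ℕ} {v v' : Fin n → V}
    (hv : LinearIndependent F v) (hv' : LinearIndependent F v')
    (h : ιMulti F n v = ιMulti F n v') :
    Submodule.span F (Set.range v) = Submodule.span F (Set.range v') := by
  ext w
  rw [← iota_mul_eq_zero_iff hv w, ← iota_mul_eq_zero_iff hv' w, h]

private lemma exists_smul_iotaMulti {n : ℕ} {b v : Fin n → V} (hb : LinearIndependent F b)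
    (hv : ∀ i, v i ∈ Submodule.span F (Set.range b)) :
    ∃ c : F, ιMulti F n v = c • ιMulti F n b := by
  classical
  set U := Submodule.span F (Set.range b) with hU
  let e : Module.Basis (Fin n) F U := Module.Basis.span hb
  let g : U [⋀^Fin n]→ₗ[F] ExteriorAlgebra F V :=
    (ExteriorAlgebra.map U.subtype).toLinearMap.compAlternatingMap (ιMulti F n)
  let v' : Fin n → U := fun i => ⟨v i, hv i⟩
  have hgv : g v' = ιMulti F n v := by
    show ExteriorAlgebra.map U.subtype (ιMulti F n v') = _
    rw [map_apply_ιMulti]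
    rfl
  have hge : g e = ιMulti F n b := by
    show ExteriorAlgebra.map U.subtype (ιMulti F n ⇑e) = _
    rw [map_apply_ιMulti]
    congr 1
    funext i
    show (U.subtype) (e i) = b i
    exact congrArg Subtype.val (Module.Basis.span_apply hb i)
  refine ⟨e.det v', ?_⟩
  rw [← hgv, ← hge]
  exact alt_apply_eq_det_smul e g v'

end Aux



open ExteriorAlgebra in
/-- Let `x ⊆ y ⊆ V` with `dim x = k` and `dim y = k+s+1`, fix a basis `x₀,…,x_{k−1}` of
`x`, let `ω = x₀ ∧ ⋯ ∧ x_{k−1}` and `W = {ω ∧ v : v ∈ y} ⊆ ⋀^{k+1} V`. Then `W` has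
dimension `s+1`, all its elements are totally decomposable, and a wedge of `k+1` linearly
independent vectors lies in `W` iff its span contains `x` and is contained in `y`. Thus
the `k`-dimensional projective subspaces of `ℙ(V)` containing `ℙ(x)` and contained in
`ℙ(y)` correspond to the points of an `s`-dimensional projective subspace contained in the
Plücker embedding of the Grassmannian. -/
theorem schubert_between_fixed_subspaces_is_linear {F : Type*} [Field F]
    {V : Type*} [AddCommGroup V] [Module F V] [FiniteDimensional F V]
    (k s : ℕ) (x y : Submodule F V) (hxy : x ≤ y)
    (hx : Module.finrank F x = k) (hy : Module.finrank F y = k + s + 1)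
    (xv : Fin k → V) (hxv : ∀ i, xv i ∈ x)
    (hxvind : LinearIndependent F xv)
    (hxvspan : Submodule.span F (Set.range xv) = x)
    (ω : ExteriorAlgebra F V)
    (hω : ω = (List.ofFn fun i => ι F (xv i)).prod)
    (W : Submodule F (ExteriorAlgebra F V))
    (hW : W = Submodule.map ((LinearMap.mulLeft F ω) ∘ₗ
      (ι F : V →ₗ[F] ExteriorAlgebra F V)) y) :
    Module.finrank F W = s + 1 ∧
    (∀ w ∈ W, ∃ v : Fin (k + 1) → V, w = (List.ofFn fun i => ι F (v i)).prod) ∧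
    (∀ v : Fin (k + 1) → V, LinearIndependent F v →
      ((List.ofFn fun i => ι F (v i)).prod ∈ W ↔
        x ≤ Submodule.span F (Set.range v) ∧ Submodule.span F (Set.range v) ≤ y)) := by
  classical
  set φ : V →ₗ[F] ExteriorAlgebra F V :=
    (LinearMap.mulLeft F ω) ∘ₗ (ι F : V →ₗ[F] ExteriorAlgebra F V) with hφdef
  have hφ : ∀ u : V, φ u = ιMulti F (k + 1) (Fin.snoc xv u) := by
    intro u
    show ω * ι F u = _
    rw [ιMulti_apply, List.ofFn_succ', List.prod_concat, hω]
    simp [Fin.snoc_castSucc, Fin.snoc_last]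
  have hker : ∀ u : V, φ u = 0 ↔ u ∈ x := by
    intro u
    rw [hφ, iotaMulti_eq_zero_iff, linearIndependent_fin_snoc, ← hxvspan]
    constructor
    · intro h
      by_contra hu
      exact h ⟨hxvind, hu⟩
    · intro h h'
      exact h'.2 h
  refine ⟨?_, ?_, ?_⟩
  · -- dimension
    set ψ : y →ₗ[F] ExteriorAlgebra F V := φ ∘ₗ y.subtype with hψdef
    have hrange : LinearMap.range ψ = W := by
      rw [hψdef, LinearMap.range_comp, Submodule.range_subtype, hW]
    have hkerψ : LinearMap.ker ψ = Submodule.comap y.subtype x := by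
      ext u
      rw [LinearMap.mem_ker, Submodule.mem_comap]
      exact hker (u : V)
    have h1 : Module.finrank F (LinearMap.ker ψ) = k := by
      rw [hkerψ, ← hx]
      exact (Submodule.comapSubtypeEquivOfLe hxy).finrank_eq
    have h2 := LinearMap.finrank_range_add_finrank_ker ψ
    rw [hrange, h1, hy] at h2
    omega
  · -- total decomposability
    intro w hw
    rw [hW] at hw
    obtain ⟨u, _, rfl⟩ := hw
    exact ⟨Fin.snoc xv u, by rw [hφ u, ιMulti_apply]⟩
  · -- characterization
    intro v hvind
    rw [← ιMulti_apply]
    constructor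
    · intro h
      rw [hW] at h
      obtain ⟨u, huy, heq⟩ := h
      rw [hφ u] at heq
      have hne : ιMulti F (k + 1) v ≠ 0 := iotaMulti_ne_zero hvind
      have hsnocind : LinearIndependent F (Fin.snoc xv u : Fin (k + 1) → V) := by
        by_contra h'
        exact hne (heq ▸ (iotaMulti_eq_zero_iff _).2 h')
      have hspan := span_eq_of_iotaMulti_eq hsnocind hvind heq
      rw [range_snoc'] at hspan
      constructor
      · rw [← hspan, ← hxvspan]
        exact Submodule.span_mono (Set.subset_insert u _)
      · rw [← hspan]
        rw [Submodule.span_le]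
        rintro w (rfl | ⟨i, rfl⟩)
        · exact huy
        · exact hxy (hxv i)
    · rintro ⟨h1, h2⟩
      have hdim : Module.finrank F (Submodule.span F (Set.range v)) = k + 1 := by
        rw [finrank_span_eq_card hvind, Fintype.card_fin]
      have hlt : x < Submodule.span F (Set.range v) := by
        refine lt_of_le_of_ne h1 fun h => ?_
        rw [← h, hx] at hdim
        omega
      obtain ⟨u, huv, hux⟩ := SetLike.exists_of_lt hlt
      have husnoc : LinearIndependent F (Fin.snoc xv u : Fin (k + 1) → V) :=
        linearIndependent_fin_snoc.2 ⟨hxvind, by rwa [hxvspan]⟩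
      have hsub : Submodule.span F (Set.range (Fin.snoc xv u : Fin (k + 1) → V)) ≤
          Submodule.span F (Set.range v) := by
        rw [range_snoc', Submodule.span_le]
        rintro w (rfl | ⟨i, rfl⟩)
        · exact huv
        · exact h1 (hxv i)
      have heqspan : Submodule.span F (Set.range (Fin.snoc xv u : Fin (k + 1) → V)) =
          Submodule.span F (Set.range v) := by
        apply Submodule.eq_of_le_of_finrank_eq hsub
        rw [hdim, finrank_span_eq_card husnoc, Fintype.card_fin]
      obtain ⟨c, hc⟩ := exists_smul_iotaMulti husnoc (fun i => by
        rw [heqspan]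
        exact Submodule.subset_span (Set.mem_range_self i))
      rw [hW]
      exact ⟨c • u, y.smul_mem c (h2 huv), by rw [map_smul, hφ u, ← hc]⟩
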